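/- Let W : X → P(Y) with X, Y finite, P strictly positive on X, α ∈ (0,1), and suppose D_α(W(x)‖Q) < ∞ for all x (Q strictly positive). Define the tilted distribution W_α^Q(x)(y) := W(x)(y)^α Q(y)^{1−α} / (Σ_{y'} W(x)(y')^α Q(y')^{1−α}) and the operator T_{α,P}(Q) := Σ_x P(x) W_α^Q(x). If Q* is a strictly positive probability mass function on Y achieving min_Q D_α(W‖Q|P), then T_{α,P}(Q*) = Q*; i.e., the Augustin mean is a fixed point of the Augustin operator. -/

import Mathlib

open scoped BigOperators

/-- A probability mass function on a finite type. -/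
def IsPMF {Y : Type*} [Fintype Y] (Q : Y → ℝ) : Prop :=
  (∀ y, 0 ≤ Q y) ∧ ∑ y, Q y = 1

/-- The power sum appearing in the Rényi divergence; since `(0:ℝ) ^ (1-α) = 0` for `1-α > 0`,
the sum automatically restricts to `y` with `Q y > 0`. -/
noncomputable def rSum {Y : Type*} [Fintype Y] (α : ℝ) (W Q : Y → ℝ) : ℝ :=
  ∑ y, W y ^ α * Q y ^ (1 - α)

/-- Order-`α` Rényi divergence (for `α ∈ (0,1)`), valued in `EReal`, with the convention
that it is `⊤` when the power sum vanishes. -/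
noncomputable def rDiv {Y : Type*} [Fintype Y] (α : ℝ) (W Q : Y → ℝ) : EReal :=
  if rSum α W Q = 0 then ⊤
  else (((1 / (α - 1)) * Real.log (rSum α W Q) : ℝ) : EReal)

/-- Kullback–Leibler divergence, valued in `EReal`, `⊤` unless `W ≪ Q`. -/
noncomputable def kDiv {Y : Type*} [Fintype Y] (W Q : Y → ℝ) : EReal :=
  if ∀ y, Q y = 0 → W y = 0 then
    (((∑ y, if W y = 0 then 0 else W y * Real.log (W y / Q y)) : ℝ) : EReal)
  else ⊤

/-- Order-`α` divergence for `α ∈ (0,1]`: Rényi for `α ≠ 1`, KL for `α = 1`. -/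
noncomputable def dA {Y : Type*} [Fintype Y] (α : ℝ) (W Q : Y → ℝ) : EReal :=
  if α = 1 then kDiv W Q else rDiv α W Q

/-- Conditional divergence `D_α(W‖Q|P) = ∑_x P(x) D_α(W(x)‖Q)`. -/
noncomputable def cDiv {X Y : Type*} [Fintype X] [Fintype Y]
    (α : ℝ) (W : X → Y → ℝ) (Q : Y → ℝ) (P : X → ℝ) : EReal :=
  ∑ x, (P x : EReal) * dA α (W x) Q

/-- Augustin information `I_α(P;W) = inf_Q D_α(W‖Q|P)`. -/
noncomputable def aInfo {X Y : Type*} [Fintype X] [Fintype Y]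
    (α : ℝ) (P : X → ℝ) (W : X → Y → ℝ) : EReal :=
  ⨅ Q ∈ {Q : Y → ℝ | IsPMF Q}, cDiv α W Q P

lemma ereal_coe_sum {ι : Type*} (s : Finset ι) (f : ι → ℝ) :
    ((∑ i ∈ s, f i : ℝ) : EReal) = ∑ i ∈ s, (f i : EReal) := by
  induction s using Finset.cons_induction with
  | empty => simp
  | cons a s ha ih => rw [Finset.sum_cons, Finset.sum_cons, EReal.coe_add, ih]

lemma cDiv_eq_coe {X Y : Type*} [Fintype X] [Fintype Y] (α : ℝ) (hα : α ≠ 1)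
    (W : X → Y → ℝ) (Q : Y → ℝ) (P : X → ℝ) (hS : ∀ x, rSum α (W x) Q ≠ 0) :
    cDiv α W Q P
      = ((∑ x, P x * ((1 / (α - 1)) * Real.log (rSum α (W x) Q)) : ℝ) : EReal) := by
  rw [cDiv, ereal_coe_sum]
  refine Finset.sum_congr rfl fun x _ => ?_
  rw [dA, if_neg hα, rDiv, if_neg (hS x), ← EReal.coe_mul]

/-- the Augustin mean is a fixed point of the Augustin operator. -/
theorem augustin_mean_fixed_point {X Y : Type*} [Fintype X] [Fintype Y]
    [Nonempty X] [Nonempty Y]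
    (α : ℝ) (hα : α ∈ Set.Ioo (0 : ℝ) 1)
    (W : X → Y → ℝ) (hW : ∀ x, IsPMF (W x))
    (P : X → ℝ) (hP : IsPMF P) (hPpos : ∀ x, 0 < P x)
    (Qstar : Y → ℝ) (hQstar : IsPMF Qstar) (hQpos : ∀ y, 0 < Qstar y)
    (hmin : ∀ Q : Y → ℝ, IsPMF Q → cDiv α W Qstar P ≤ cDiv α W Q P) :
    (fun y => ∑ x, P x *
        (W x y ^ α * Qstar y ^ (1 - α) / ∑ y', W x y' ^ α * Qstar y' ^ (1 - α)))
      = Qstar := by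
  obtain ⟨hα0, hα1⟩ := hα
  have hβ : (0:ℝ) < 1 - α := by linarith
  have hα1' : α ≠ 1 := ne_of_lt hα1
  have hinv : 1 / (α - 1) < 0 := by
    apply div_neg_of_pos_of_neg one_pos; linarith
  -- existence of a positive entry of W x
  have hWex : ∀ x, ∃ y, 0 < W x y := by
    intro x
    by_contra h
    push_neg at h
    have hz : ∀ y, W x y = 0 := fun y => le_antisymm (h y) ((hW x).1 y)
    have h2 := (hW x).2
    rw [Finset.sum_congr rfl fun y _ => hz y, Finset.sum_const_zero] at h2
    exact zero_ne_one h2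
  -- positivity of terms
  have hterm_nonneg : ∀ x y, 0 ≤ W x y ^ α * Qstar y ^ (1 - α) := by
    intro x y
    exact mul_nonneg (Real.rpow_nonneg ((hW x).1 y) α) (Real.rpow_nonneg (hQpos y).le _)
  -- S x := rSum α (W x) Qstar
  set S : X → ℝ := fun x => rSum α (W x) Qstar with hSdef
  have hSpos : ∀ x, 0 < S x := by
    intro x
    obtain ⟨y0, hy0⟩ := hWex x
    refine Finset.sum_pos' (fun y _ => hterm_nonneg x y) ⟨y0, Finset.mem_univ _, ?_⟩
    exact mul_pos (Real.rpow_pos_of_pos hy0 α) (Real.rpow_pos_of_pos (hQpos y0) _)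
  -- tilted distributions
  set V : X → Y → ℝ := fun x y => W x y ^ α * Qstar y ^ (1 - α) / S x with hVdef
  have hVnonneg : ∀ x y, 0 ≤ V x y := fun x y => div_nonneg (hterm_nonneg x y) (hSpos x).le
  have hVsum : ∀ x, ∑ y, V x y = 1 := by
    intro x
    rw [hVdef]
    simp only
    rw [← Finset.sum_div, div_eq_one_iff_eq (hSpos x).ne']
    rfl
  have hVpos : ∀ x y, 0 < W x y → 0 < V x y := by
    intro x y h
    exact div_pos (mul_pos (Real.rpow_pos_of_pos h α) (Real.rpow_pos_of_pos (hQpos y) _)) (hSpos x)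
  -- Q' := the Augustin operator applied to Qstar
  set Q' : Y → ℝ := fun y => ∑ x, P x * V x y with hQ'def
  have hQ'nonneg : ∀ y, 0 ≤ Q' y :=
    fun y => Finset.sum_nonneg fun x _ => mul_nonneg (hPpos x).le (hVnonneg x y)
  have hQ'sum : ∑ y, Q' y = 1 := by
    rw [hQ'def]
    simp only
    rw [Finset.sum_comm]
    simp only [← Finset.mul_sum]
    simp [hVsum, hP.2]
  have hQ'pmf : IsPMF Q' := ⟨hQ'nonneg, hQ'sum⟩
  have hQ'pos : ∀ x y, 0 < W x y → 0 < Q' y := by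
    intro x y h
    have h1 : 0 < P x * V x y := mul_pos (hPpos x) (hVpos x y h)
    calc (0:ℝ) < P x * V x y := h1
    _ ≤ Q' y := Finset.single_le_sum
        (fun x' _ => mul_nonneg (hPpos x').le (hVnonneg x' y)) (Finset.mem_univ x)
  set S' : X → ℝ := fun x => rSum α (W x) Q' with hS'def
  have hS'pos : ∀ x, 0 < S' x := by
    intro x
    obtain ⟨y0, hy0⟩ := hWex x
    refine Finset.sum_pos' (fun y _ => mul_nonneg (Real.rpow_nonneg ((hW x).1 y) α)
      (Real.rpow_nonneg (hQ'nonneg y) _)) ⟨y0, Finset.mem_univ _, ?_⟩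
    exact mul_pos (Real.rpow_pos_of_pos hy0 α) (Real.rpow_pos_of_pos (hQ'pos x y0 hy0) _)
  -- key identity: S' x = S x * ∑ y, V x y * (Q' y / Qstar y)^(1-α)
  have hiden : ∀ x, S' x = S x * ∑ y, V x y * (Q' y / Qstar y) ^ (1 - α) := by
    intro x
    rw [Finset.mul_sum]
    refine Finset.sum_congr rfl fun y _ => ?_
    have hq : Qstar y ≠ 0 := (hQpos y).ne'
    have h2 : Q' y ^ (1 - α) = Qstar y ^ (1 - α) * (Q' y / Qstar y) ^ (1 - α) := by
      rw [← Real.mul_rpow (hQpos y).le (div_nonneg (hQ'nonneg y) (hQpos y).le),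
        ← mul_div_assoc, mul_div_cancel_left₀ _ hq]
    show W x y ^ α * Q' y ^ (1 - α) = S x * (V x y * (Q' y / Qstar y) ^ (1 - α))
    rw [h2, hVdef]
    field_simp
    rw [mul_div_assoc, div_self (hSpos x).ne', mul_one]
  have hVposW : ∀ x y, 0 < V x y → 0 < W x y := by
    intro x y h
    by_contra hc
    push_neg at hc
    have hz : W x y = 0 := le_antisymm hc ((hW x).1 y)
    rw [hVdef] at h
    simp only [hz, Real.zero_rpow hα0.ne', zero_mul, zero_div] at h
    exact lt_irrefl 0 h
  classical
  -- Jensen's inequality per x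
  have hjensen : ∀ x, (1 - α) * ∑ y, V x y * Real.log (Q' y / Qstar y)
      ≤ Real.log (S' x) - Real.log (S x) := by
    intro x
    set t : Finset Y := Finset.univ.filter (fun y => 0 < V x y) with ht
    have hwsum : ∑ y ∈ t, V x y = 1 := by
      rw [ht, Finset.sum_filter_of_ne, hVsum x]
      intro y _ h
      exact lt_of_le_of_ne (hVnonneg x y) (Ne.symm h)
    have hQ'p : ∀ y ∈ t, 0 < Q' y / Qstar y := by
      intro y hy
      rw [ht, Finset.mem_filter] at hy
      exact div_pos (hQ'pos x y (hVposW x y hy.2)) (hQpos y)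
    have hjen := (strictConcaveOn_log_Ioi.concaveOn).le_map_sum
      (t := t) (w := V x) (p := fun y => (Q' y / Qstar y) ^ (1 - α))
      (fun y _ => hVnonneg x y) hwsum
      (fun y hy => Set.mem_Ioi.mpr (Real.rpow_pos_of_pos (hQ'p y hy) _))
    simp only [smul_eq_mul] at hjen
    have hR : ∑ y ∈ t, V x y * (Q' y / Qstar y) ^ (1 - α)
        = ∑ y, V x y * (Q' y / Qstar y) ^ (1 - α) := by
      rw [ht]
      apply Finset.sum_filter_of_ne
      intro y _ h
      rcases (hVnonneg x y).eq_or_lt with h' | h'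
      · exact absurd (by rw [← h', zero_mul]) h
      · exact h'
    have hL : ∑ y ∈ t, V x y * Real.log ((Q' y / Qstar y) ^ (1 - α))
        = (1 - α) * ∑ y, V x y * Real.log (Q' y / Qstar y) := by
      calc ∑ y ∈ t, V x y * Real.log ((Q' y / Qstar y) ^ (1 - α))
          = ∑ y ∈ t, (1 - α) * (V x y * Real.log (Q' y / Qstar y)) := by
            refine Finset.sum_congr rfl fun y hy => ?_
            rw [Real.log_rpow (hQ'p y hy)]; ring
        _ = (1 - α) * ∑ y ∈ t, V x y * Real.log (Q' y / Qstar y) := by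
            rw [Finset.mul_sum]
        _ = (1 - α) * ∑ y, V x y * Real.log (Q' y / Qstar y) := by
            congr 1
            rw [ht]
            apply Finset.sum_filter_of_ne
            intro y _ h
            rcases (hVnonneg x y).eq_or_lt with h' | h'
            · exact absurd (by rw [← h', zero_mul]) h
            · exact h'
    have hsum_eq : ∑ y, V x y * (Q' y / Qstar y) ^ (1 - α) = S' x / S x := by
      rw [eq_div_iff (hSpos x).ne', hiden x]; ring
    rw [hL, hR, hsum_eq, Real.log_div (hS'pos x).ne' (hSpos x).ne'] at hjen
    exact hjen
  -- swap the double sum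
  have hswap : ∑ x, P x * ∑ y, V x y * Real.log (Q' y / Qstar y)
      = ∑ y, Q' y * Real.log (Q' y / Qstar y) := by
    simp only [Finset.mul_sum]
    rw [Finset.sum_comm]
    refine Finset.sum_congr rfl fun y _ => ?_
    rw [hQ'def]
    simp only
    rw [Finset.sum_mul]
    refine Finset.sum_congr rfl fun x _ => by ring
  -- global inequality
  have hane : α - 1 ≠ 0 := by intro h; apply hα1'; linarith
  have hDle : ∑ x, P x * ((1 / (α - 1)) * Real.log (S' x))
      ≤ (∑ x, P x * ((1 / (α - 1)) * Real.log (S x)))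
        - ∑ y, Q' y * Real.log (Q' y / Qstar y) := by
    have h1 : ∀ x, P x * ((1 / (α - 1)) * Real.log (S' x))
        ≤ P x * ((1 / (α - 1)) * Real.log (S x))
          - P x * ∑ y, V x y * Real.log (Q' y / Qstar y) := by
      intro x
      have h3 := mul_le_mul_of_nonpos_left (hjensen x) hinv.le
      rw [mul_sub] at h3
      have h4 : (1 / (α - 1)) * ((1 - α) * ∑ y, V x y * Real.log (Q' y / Qstar y))
          = -(∑ y, V x y * Real.log (Q' y / Qstar y)) := by
        field_simp
        ring
      rw [h4] at h3
      have h2 : (1 / (α - 1)) * Real.log (S' x)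
          ≤ (1 / (α - 1)) * Real.log (S x) - ∑ y, V x y * Real.log (Q' y / Qstar y) := by
        linarith
      have h5 := mul_le_mul_of_nonneg_left h2 (hPpos x).le
      rw [mul_sub] at h5
      exact h5
    have h6 := Finset.sum_le_sum (fun x (_ : x ∈ Finset.univ) => h1 x)
    rw [Finset.sum_sub_distrib, hswap] at h6
    exact h6
  -- minimality
  have hSne : ∀ x, rSum α (W x) Qstar ≠ 0 := fun x => (hSpos x).ne'
  have hS'ne : ∀ x, rSum α (W x) Q' ≠ 0 := fun x => (hS'pos x).ne'
  have hmin' : (∑ x, P x * ((1 / (α - 1)) * Real.log (S x)))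
      ≤ ∑ x, P x * ((1 / (α - 1)) * Real.log (S' x)) := by
    have h := hmin Q' hQ'pmf
    rw [cDiv_eq_coe α hα1' W Qstar P hSne, cDiv_eq_coe α hα1' W Q' P hS'ne] at h
    exact_mod_cast h
  have hKLle : (∑ y, Q' y * Real.log (Q' y / Qstar y)) ≤ 0 := by linarith
  -- Gibbs argument: KL ≤ 0 forces Q' = Qstar
  set A : Finset Y := Finset.univ.filter (fun y => 0 < Q' y) with hA
  have hQ'zero : ∀ y ∉ A, Q' y = 0 := by
    intro y hy
    rw [hA, Finset.mem_filter] at hy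
    push_neg at hy
    exact le_antisymm (le_of_not_gt fun h => absurd (hy (Finset.mem_univ y) |>.not_gt h) (by simp)) (hQ'nonneg y)
  have hKLA : (∑ y, Q' y * Real.log (Q' y / Qstar y))
      = ∑ y ∈ A, Q' y * Real.log (Q' y / Qstar y) := by
    symm
    rw [hA]
    apply Finset.sum_filter_of_ne
    intro y _ h
    rcases (hQ'nonneg y).eq_or_lt with h' | h'
    · exact absurd (by rw [← h', zero_mul]) h
    · exact h'
  have hterm : ∀ y, 0 < Q' y → Q' y - Qstar y ≤ Q' y * Real.log (Q' y / Qstar y) := by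
    intro y hy
    have ht : 0 < Qstar y / Q' y := div_pos (hQpos y) hy
    have hlog := Real.log_le_sub_one_of_pos ht
    have hc : Q' y * (Qstar y / Q' y) = Qstar y := by field_simp
    have h5 := mul_le_mul_of_nonneg_left hlog hy.le
    rw [mul_sub, hc, mul_one] at h5
    have hrw : Real.log (Q' y / Qstar y) = -Real.log (Qstar y / Q' y) := by
      rw [← Real.log_inv, inv_div]
    rw [hrw, mul_neg]
    linarith
  have hsumA_Q' : ∑ y ∈ A, Q' y = 1 := by
    rw [hA, Finset.sum_filter_of_ne, hQ'sum]
    intro y _ h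
    exact lt_of_le_of_ne (hQ'nonneg y) (Ne.symm h)
  have hsumA_Qstar : 1 ≤ ∑ y ∈ A, Qstar y := by
    have h7 : ∑ y ∈ A, (Q' y - Qstar y) ≤ ∑ y ∈ A, Q' y * Real.log (Q' y / Qstar y) := by
      refine Finset.sum_le_sum fun y hy => ?_
      rw [hA, Finset.mem_filter] at hy
      exact hterm y hy.2
    rw [Finset.sum_sub_distrib, hsumA_Q'] at h7
    rw [hKLA] at hKLle
    linarith
  have hAuniv : A = Finset.univ := by
    rw [Finset.eq_univ_iff_forall]
    by_contra h
    push_neg at h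
    obtain ⟨y0, hy0⟩ := h
    have hsub : A ⊆ Finset.univ.erase y0 :=
      Finset.subset_erase.mpr ⟨Finset.subset_univ A, hy0⟩
    have h8 : ∑ y ∈ A, Qstar y ≤ ∑ y ∈ Finset.univ.erase y0, Qstar y :=
      Finset.sum_le_sum_of_subset_of_nonneg hsub (fun y _ _ => (hQpos y).le)
    have h9 : ∑ y ∈ Finset.univ.erase y0, Qstar y + Qstar y0 = 1 := by
      rw [Finset.sum_erase_add _ _ (Finset.mem_univ y0), hQstar.2]
    have := hQpos y0
    linarith
  have hQ'posall : ∀ y, 0 < Q' y := by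
    intro y
    have : y ∈ A := hAuniv ▸ Finset.mem_univ y
    rw [hA, Finset.mem_filter] at this
    exact this.2
  -- equality case
  have hg_nonneg : ∀ y, 0 ≤ Q' y * Real.log (Q' y / Qstar y) - (Q' y - Qstar y) :=
    fun y => sub_nonneg.mpr (hterm y (hQ'posall y))
  have hg_sum : ∑ y, (Q' y * Real.log (Q' y / Qstar y) - (Q' y - Qstar y)) = 
      ∑ y, Q' y * Real.log (Q' y / Qstar y) := by
    rw [Finset.sum_sub_distrib, Finset.sum_sub_distrib, hQ'sum, hQstar.2, sub_self, sub_zero]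
  have hg_zero : ∀ y, Q' y * Real.log (Q' y / Qstar y) - (Q' y - Qstar y) = 0 := by
    have h10 : ∑ y, (Q' y * Real.log (Q' y / Qstar y) - (Q' y - Qstar y)) = 0 := by
      have := Finset.sum_nonneg (fun y (_ : y ∈ Finset.univ) => hg_nonneg y)
      rw [hg_sum] at this ⊢
      linarith
    intro y
    exact (Finset.sum_eq_zero_iff_of_nonneg (fun y _ => hg_nonneg y)).mp h10 y (Finset.mem_univ y)
  have hfinal : ∀ y, Q' y = Qstar y := by
    intro y
    by_contra hne
    have hy := hQ'posall y
    have ht : 0 < Qstar y / Q' y := div_pos (hQpos y) hy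
    have htne : Qstar y / Q' y ≠ 1 := by
      intro h
      rw [div_eq_one_iff_eq hy.ne'] at h
      exact hne h.symm
    have hlog := Real.log_lt_sub_one_of_pos ht htne
    have hc : Q' y * (Qstar y / Q' y) = Qstar y := by field_simp
    have h5 := mul_lt_mul_of_pos_left hlog hy
    rw [mul_sub, hc, mul_one] at h5
    have hrw : Real.log (Q' y / Qstar y) = -Real.log (Qstar y / Q' y) := by
      rw [← Real.log_inv, inv_div]
    have h11 := hg_zero y
    rw [hrw, mul_neg] at h11
    linarith
  funext y
  have h := hfinal y
  rw [hQ'def] at h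
  simp only [hVdef, hSdef, rSum] at h
  exact h
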